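/- arXiv:2006.03197 — 6 statements merged into one kernel-verified Lean document; each statement's English description precedes it below -/
import Mathlib

section
/- For (m,a), (n,b) ∈ P ⋊ ℕ×, the set (m + aP) ∩ (n + bP) is nonempty if and only if gcd(a,b) divides m - n. -/
def Pset : Set ℕ := {n | n = 0 ∨ 2 ≤ n}

/-- (m + aP) ∩ (n + bP) is nonempty iff gcd(a,b) ∣ m - n (in ℤ). -/
theorem stmt7 (m n a b : ℕ) (hm : m ∈ Pset) (hn : n ∈ Pset)
    (ha : 0 < a) (hb : 0 < b) :
    (∃ k : ℕ, (∃ p ∈ Pset, k = m + a * p) ∧ (∃ p ∈ Pset, k = n + b * p)) ↔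
      (Nat.gcd a b : ℤ) ∣ (m : ℤ) - (n : ℤ) := by
  constructor
  · rintro ⟨k, ⟨p, _, hp⟩, ⟨q, _, hq⟩⟩
    have h : (m : ℤ) - n = (b : ℤ) * q - (a : ℤ) * p := by
      have : m + a * p = n + b * q := hp ▸ hq
      push_cast [this]
      omega
    rw [h]
    exact dvd_sub
      ((Int.natCast_dvd_natCast.mpr (Nat.gcd_dvd_right a b)).mul_right _)
      ((Int.natCast_dvd_natCast.mpr (Nat.gcd_dvd_left a b)).mul_right _)
  · intro hd
    set g := Nat.gcd a b with hgdef
    have hg : 0 < g := Nat.gcd_pos_of_pos_left b ha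
    obtain ⟨c, hc⟩ := hd
    obtain ⟨a', ha'⟩ : (g : ℤ) ∣ (a : ℤ) :=
      Int.natCast_dvd_natCast.mpr (Nat.gcd_dvd_left a b)
    obtain ⟨b', hb'⟩ : (g : ℤ) ∣ (b : ℤ) :=
      Int.natCast_dvd_natCast.mpr (Nat.gcd_dvd_right a b)
    have ha1 : 1 ≤ a' := by
      nlinarith [Int.natCast_pos.mpr ha, Int.natCast_pos.mpr hg]
    have hb1 : 1 ≤ b' := by
      nlinarith [Int.natCast_pos.mpr hb, Int.natCast_pos.mpr hg]
    have hbez : (g : ℤ) = a * Nat.gcdA a b + b * Nat.gcdB a b := Nat.gcd_eq_gcd_ab a b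
    set x0 : ℤ := -(Nat.gcdA a b) * c with hx0
    set y0 : ℤ := (Nat.gcdB a b) * c with hy0
    have hkey : (m : ℤ) - n = b * y0 - a * x0 := by
      rw [hc, hbez]; ring
    set t : ℤ := |x0| + |y0| + 2 with ht
    set p : ℤ := x0 + t * b' with hpdef
    set q : ℤ := y0 + t * a' with hqdef
    have hp2 : 2 ≤ p := by
      have h1 : t * 1 ≤ t * b' := by
        apply mul_le_mul_of_nonneg_left hb1
        positivity
      have := abs_nonneg y0
      have := neg_abs_le x0
      simp only [mul_one] at h1
      omega
    have hq2 : 2 ≤ q := by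
      have h1 : t * 1 ≤ t * a' := by
        apply mul_le_mul_of_nonneg_left ha1
        positivity
      have := abs_nonneg x0
      have := neg_abs_le y0
      simp only [mul_one] at h1
      omega
    have heq : (m : ℤ) + a * p = n + b * q := by
      have : (b : ℤ) * (t * a') = a * (t * b') := by
        rw [ha', hb']; ring
      rw [hpdef, hqdef]
      nlinarith [hkey, this]
    refine ⟨m + a * p.toNat, ⟨p.toNat, Or.inr (by omega), rfl⟩, ⟨q.toNat, Or.inr (by omega), ?_⟩⟩
    have hpn : (p.toNat : ℤ) = p := Int.toNat_of_nonneg (by omega)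
    have hqn : (q.toNat : ℤ) = q := Int.toNat_of_nonneg (by omega)
    have : (m : ℤ) + a * p.toNat = n + b * q.toNat := by rw [hpn, hqn]; exact heq
    exact_mod_cast this
end

section
/- The elements (5,7) and (2,3) of P ⋊ ℕ× have common upper bounds in the left-invariant partial order but have no least common upper bound; in particular both (26,21) and (47,21) are minimal common upper bounds and they are incomparable. -/
def valid (p : ℕ × ℕ) : Prop := p.1 ∈ Pset ∧ 0 < p.2

/-- (m,a) ≤ (k,c) iff k ∈ m + aP and a ∣ c -/
def le' (p q : ℕ × ℕ) : Prop := (∃ c ∈ Pset, q.1 = p.1 + p.2 * c) ∧ p.2 ∣ q.2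

/-- common upper bound of (5,7) and (2,3) -/
def cub (u : ℕ × ℕ) : Prop := le' (5, 7) u ∧ le' (2, 3) u

lemma cub2621 : cub (26, 21) :=
  ⟨⟨⟨3, Or.inr (by norm_num), by norm_num⟩, ⟨3, rfl⟩⟩,
   ⟨⟨8, Or.inr (by norm_num), by norm_num⟩, ⟨7, rfl⟩⟩⟩

lemma cub4721 : cub (47, 21) :=
  ⟨⟨⟨6, Or.inr (by norm_num), by norm_num⟩, ⟨3, rfl⟩⟩,
   ⟨⟨15, Or.inr (by norm_num), by norm_num⟩, ⟨7, rfl⟩⟩⟩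

lemma a_eq_21 {a : ℕ} (h7 : 7 ∣ a) (h3 : 3 ∣ a) (h21 : a ∣ 21) : a = 21 := by
  have h : 21 ∣ a := by
    have := Nat.Coprime.mul_dvd_of_dvd_of_dvd (by norm_num : Nat.Coprime 7 3) h7 h3
    simpa using this
  exact Nat.dvd_antisymm h21 h

/-- (5,7) and (2,3) have common upper bounds in P ⋊ ℕ× but no least common
upper bound; both (26,21) and (47,21) are minimal common upper bounds and
they are incomparable. -/
theorem stmt11 :
    (∃ u : ℕ × ℕ, valid u ∧ cub u) ∧
    (¬ ∃ u : ℕ × ℕ, valid u ∧ cub u ∧ ∀ w : ℕ × ℕ, valid w → cub w → le' u w) ∧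
    (cub (26, 21) ∧ cub (47, 21)) ∧
    (∀ w : ℕ × ℕ, valid w → cub w → le' w (26, 21) → w = (26, 21)) ∧
    (∀ w : ℕ × ℕ, valid w → cub w → le' w (47, 21) → w = (47, 21)) ∧
    (¬ le' (26, 21) (47, 21) ∧ ¬ le' (47, 21) (26, 21)) := by
  have v26 : valid (26, 21) := ⟨Or.inr (by norm_num), by norm_num⟩
  have v47 : valid (47, 21) := ⟨Or.inr (by norm_num), by norm_num⟩
  refine ⟨⟨(26, 21), v26, cub2621⟩, ?_, ⟨cub2621, cub4721⟩, ?_, ?_, ?_, ?_⟩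
  · rintro ⟨⟨m, a⟩, hv, hc, hall⟩
    obtain ⟨⟨c1, hc1, he1⟩, ha1⟩ := hall (26, 21) v26 cub2621
    obtain ⟨⟨c2, hc2, he2⟩, ha2⟩ := hall (47, 21) v47 cub4721
    obtain ⟨⟨_, h7⟩, ⟨_, h3⟩⟩ := hc
    have ha : a = 21 := a_eq_21 h7 h3 ha1
    subst ha
    simp only [Pset, Set.mem_setOf_eq] at hc1 hc2
    simp only at he1 he2
    omega
  · rintro ⟨m, a⟩ hv hc ⟨⟨c, hc0, he⟩, ha⟩
    obtain ⟨⟨⟨p, hp, hep⟩, h7⟩, ⟨q, hq, heq⟩, h3⟩ := hc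
    have ha21 : a = 21 := a_eq_21 h7 h3 ha
    subst ha21
    simp only [Pset, Set.mem_setOf_eq] at hc0 hp hq
    simp only at he hep heq
    have : m = 26 := by omega
    simp [Prod.ext_iff, this]
  · rintro ⟨m, a⟩ hv hc ⟨⟨c, hc0, he⟩, ha⟩
    obtain ⟨⟨⟨p, hp, hep⟩, h7⟩, ⟨q, hq, heq⟩, h3⟩ := hc
    have ha21 : a = 21 := a_eq_21 h7 h3 ha
    subst ha21
    simp only [Pset, Set.mem_setOf_eq] at hc0 hp hq
    simp only at he hep heq
    have : m = 47 := by omega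
    simp [Prod.ext_iff, this]
  · rintro ⟨⟨c, hc0, he⟩, -⟩
    simp only [Pset, Set.mem_setOf_eq] at hc0
    simp only at he
    omega
  · rintro ⟨⟨c, hc0, he⟩, -⟩
    simp only [Pset, Set.mem_setOf_eq] at hc0
    simp only at he
    omega
end

section
/- If (m,a) and (n,b) in P ⋊ ℕ× have a common upper bound, then (m,a) ⋓ (n,b) = (ℓ, lcm(a,b)), where ℓ is the smallest element of (m + aP) ∩ (n + bP); that is, (ℓ, lcm(a,b)) is a common upper bound of (m,a) and (n,b) and its second coordinate divides the second coordinate of every common upper bound. -/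
/-- If (m,a) and (n,b) have a common upper bound, then (ℓ, lcm(a,b)) is a
common upper bound, where ℓ is the smallest element of (m+aP) ∩ (n+bP), and
the second coordinate of any common upper bound is divisible by lcm(a,b). -/
theorem stmt13 (m n a b : ℕ) (hm : m ∈ Pset) (hn : n ∈ Pset)
    (ha : 0 < a) (hb : 0 < b)
    (h : ∃ u : ℕ × ℕ, valid u ∧ le' (m, a) u ∧ le' (n, b) u) :
    le' (m, a) (sInf {x : ℕ | (∃ p ∈ Pset, x = m + a * p) ∧ ∃ p ∈ Pset, x = n + b * p},
        Nat.lcm a b) ∧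
    le' (n, b) (sInf {x : ℕ | (∃ p ∈ Pset, x = m + a * p) ∧ ∃ p ∈ Pset, x = n + b * p},
        Nat.lcm a b) ∧
    ∀ k c : ℕ, le' (m, a) (k, c) → le' (n, b) (k, c) → Nat.lcm a b ∣ c := by
  obtain ⟨u, hu, ⟨⟨c1, hc1, hu1⟩, hd1⟩, ⟨c2, hc2, hu2⟩, hd2⟩ := h
  have hne : {x : ℕ | (∃ p ∈ Pset, x = m + a * p) ∧ ∃ p ∈ Pset, x = n + b * p}.Nonempty :=
    ⟨u.1, ⟨c1, hc1, hu1⟩, ⟨c2, hc2, hu2⟩⟩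
  have hmem := Nat.sInf_mem hne
  obtain ⟨⟨p1, hp1, he1⟩, p2, hp2, he2⟩ := hmem
  refine ⟨⟨⟨p1, hp1, he1⟩, Nat.dvd_lcm_left a b⟩,
    ⟨⟨p2, hp2, he2⟩, Nat.dvd_lcm_right a b⟩, ?_⟩
  intro k c h1 h2
  exact Nat.lcm_dvd h1.2 h2.2
end

section
/- In any C*-algebra (or ring) with elements s, t satisfying t² = s³, st = ts, s*t = ts*, t*s = st*, and s*s = t*t = 1: for any integers k₁, k₂ and any representations k₁ = k₁' + 3u, k₂ = k₂' - 2u (u ∈ ℤ), one has s^((k₁)) t^((k₂)) = s^((k₁')) t^((k₂')), where x^((k)) denotes x^k for k ≥ 0 and (x*)^(-k) for k < 0. -/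
/-- In a unital *-ring with isometries s, t satisfying t² = s³, st = ts,
s*t = ts*, t*s = st*: for integers k₁ = k₁' + 3u and k₂ = k₂' - 2u one has
s^((k₁)) t^((k₂)) = s^((k₁')) t^((k₂')), where x^((k)) = x^k for k ≥ 0 and
(x*)^(-k) for k < 0. -/
theorem stmt14 {R : Type*} [Ring R] [StarRing R] (s t : R)
    (hs : star s * s = 1) (ht : star t * t = 1)
    (hR1 : t ^ 2 = s ^ 3) (hR2 : s * t = t * s)
    (hR2' : star s * t = t * star s) (hR2'' : star t * s = s * star t)
    (pw : R → ℤ → R)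
    (hpw : ∀ (x : R) (k : ℤ), pw x k = if 0 ≤ k then x ^ k.toNat else (star x) ^ (-k).toNat)
    (k₁ k₂ k₁' k₂' u : ℤ) (h₁ : k₁ = k₁' + 3 * u) (h₂ : k₂ = k₂' - 2 * u) :
    pw s k₁ * pw t k₂ = pw s k₁' * pw t k₂' := by
  -- step 1: pw s (a+1) = pw s a * s
  have hsucc : ∀ a : ℤ, pw s (a + 1) = pw s a * s := by
    intro a
    rw [hpw, hpw]
    by_cases h : 0 ≤ a
    · have h1 : 0 ≤ a + 1 := by omega
      have h2 : (a + 1).toNat = a.toNat + 1 := by omega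
      simp [h, h1, h2, pow_succ]
    · by_cases h1 : 0 ≤ a + 1
      · have ha : a = -1 := by omega
        subst ha
        simp [hs]
      · have h2 : (-a).toNat = (-(a + 1)).toNat + 1 := by omega
        simp only [h, h1, if_false, h2, pow_succ]
        rw [mul_assoc, hs, mul_one]
  -- step 2: pw s (a+3) = pw s a * s^3
  have hL1 : ∀ a : ℤ, pw s (a + 3) = pw s a * s ^ 3 := by
    intro a
    have : a + 3 = a + 1 + 1 + 1 := by ring
    rw [this, hsucc, hsucc, hsucc]
    noncomm_ring
  -- commutation facts
  have cts : Commute (star t) s := hR2''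
  -- step 3: s^3 * pw t (b-2) = pw t b
  have hL2 : ∀ b : ℤ, s ^ 3 * pw t (b - 2) = pw t b := by
    intro b
    rw [hpw, hpw]
    by_cases h2 : 2 ≤ b
    · have hb : 0 ≤ b := by omega
      have hb2 : (0:ℤ) ≤ b - 2 := by omega
      have hn : b.toNat = 2 + (b - 2).toNat := by omega
      simp only [hb, hb2, if_true, hn, pow_add]
      rw [← hR1]
    · by_cases h1 : b = 1
      · subst h1
        norm_num
        calc s ^ 3 * star t = star t * s ^ 3 := ((cts.pow_right 3)).symm
          _ = star t * t ^ 2 := by rw [hR1]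
          _ = t := by rw [sq, ← mul_assoc, ht, one_mul]
      · have hb : ¬ (0 ≤ b - 2) := by omega
        have hn : (-(b - 2)).toNat = (-b).toNat + 2 := by omega
        have hpb : (if 0 ≤ b then t ^ b.toNat else star t ^ (-b).toNat)
            = star t ^ (-b).toNat := by
          split_ifs with h
          · have hb0 : b = 0 := by omega
            subst hb0; simp
          · rfl
        simp only [hb, if_false, hn, pow_add, hpb]
        calc s ^ 3 * (star t ^ (-b).toNat * star t ^ 2)
            = star t ^ (-b).toNat * (s ^ 3 * star t ^ 2) := by
              rw [← mul_assoc, (cts.pow_pow _ _).symm.eq, mul_assoc]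
          _ = star t ^ (-b).toNat * (star t ^ 2 * s ^ 3) := by
              rw [(cts.pow_pow 2 3).eq]
          _ = star t ^ (-b).toNat * (star t ^ 2 * t ^ 2) := by rw [hR1]
          _ = star t ^ (-b).toNat := by
              rw [sq, sq, mul_assoc (star t), ← mul_assoc (star t) t, ht, one_mul, ht,
                mul_one]
  -- the step lemma
  have step : ∀ a b : ℤ, pw s (a + 3) * pw t (b - 2) = pw s a * pw t b := by
    intro a b
    rw [hL1, mul_assoc, hL2]
  subst h₁ h₂
  induction u using Int.induction_on with
  | zero => norm_num
  | succ i ih =>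
      have e1 : k₁' + 3 * ((i : ℤ) + 1) = (k₁' + 3 * i) + 3 := by ring
      have e2 : k₂' - 2 * ((i : ℤ) + 1) = (k₂' - 2 * i) - 2 := by ring
      rw [e1, e2, step, ih]
  | pred i ih =>
      have e1 : k₁' + 3 * (-(i : ℤ)) = (k₁' + 3 * (-(i : ℤ) - 1)) + 3 := by ring
      have e2 : k₂' - 2 * (-(i : ℤ)) = (k₂' - 2 * (-(i : ℤ) - 1)) - 2 := by ring
      rw [e1, e2, step] at ih
      exact ih
end

section
/- Let s, t, v_p (p prime) be isometries in a C*-algebra satisfying relations (R1) t² = s³; (R2) st=ts, s*t=ts*, t*s=st*; (T1) v_p s = s^p v_p, v_p t = t^p v_p, v_p s* = s*^p v_p, v_p t* = t*^p v_p; and (T4) s* v_p = s^{p-1} v_p s*. Then for all a ∈ ℕ× with v_a := ∏_p v_p^{e_p(a)} (e_p(a) = p-adic valuation of a), one has s* v_a = s^{a-1} v_a s*. -/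
lemma vpow_comm {A : Type*} [Ring A] (s : A) (w : A) (p : ℕ)
    (h : w * s = s ^ p * w) : ∀ n : ℕ, w * s ^ n = s ^ (p * n) * w := by
  intro n
  induction n with
  | zero => simp
  | succ n ih =>
      rw [pow_succ, ← mul_assoc, ih, mul_assoc, h, ← mul_assoc, ← pow_add]
      ring_nf

/-- If s, t, v_p (p prime) are isometries satisfying (R1), (R2), (T1), (T2),
and (T4) s* v_p = s^{p-1} v_p s*, then for all a ∈ ℕ× the isometry
v_a = ∏_p v_p^{e_p(a)} satisfies s* v_a = s^{a-1} v_a s*. -/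
theorem stmt15 {A : Type*} [Ring A] [StarRing A] (s t : A) (v : ℕ → A)
    (hs : star s * s = 1) (ht : star t * t = 1)
    (hv : ∀ p : ℕ, p.Prime → star (v p) * v p = 1)
    (hR1 : t ^ 2 = s ^ 3) (hR2 : s * t = t * s)
    (hR2' : star s * t = t * star s) (hR2'' : star t * s = s * star t)
    (hT1s : ∀ p : ℕ, p.Prime → v p * s = s ^ p * v p)
    (hT1t : ∀ p : ℕ, p.Prime → v p * t = t ^ p * v p)
    (hT1s' : ∀ p : ℕ, p.Prime → v p * star s = (star s) ^ p * v p)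
    (hT1t' : ∀ p : ℕ, p.Prime → v p * star t = (star t) ^ p * v p)
    (hT2 : ∀ p q : ℕ, p.Prime → q.Prime → v p * v q = v q * v p)
    (hT4 : ∀ p : ℕ, p.Prime → star s * v p = s ^ (p - 1) * v p * star s)
    (V : ℕ → A) (hV : ∀ a : ℕ, V a = ((a.primeFactorsList).map v).prod) :
    ∀ a : ℕ, 0 < a → star s * V a = s ^ (a - 1) * V a * star s := by
  have key : ∀ L : List ℕ, (∀ p ∈ L, p.Prime) →
      star s * (L.map v).prod = s ^ (L.prod - 1) * (L.map v).prod * star s := by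
    intro L
    induction L with
    | nil => intro _; simp
    | cons p L ih =>
        intro hL
        have hp : p.Prime := hL p List.mem_cons_self
        have hLp : ∀ q ∈ L, q.Prime := fun q hq => hL q (List.mem_cons_of_mem p hq)
        have hm : 1 ≤ L.prod := by
          apply List.one_le_prod_of_one_le
          intro q hq
          exact (hLp q hq).one_lt.le
        set m := L.prod with hmdef
        have hc := vpow_comm s (v p) p (hT1s p hp) (m - 1)
        have harith : p * m - 1 = (p - 1) + p * (m - 1) := by
          have h1 : p * (m - 1) + p = p * m := by
            obtain ⟨k, hk⟩ := Nat.exists_eq_add_of_le hm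
            rw [hk, Nat.add_sub_cancel_left]; ring
          have h2 := hp.pos
          omega
        simp only [List.map_cons, List.prod_cons]
        rw [← mul_assoc, hT4 p hp, mul_assoc, mul_assoc, ih hLp,
          show v p * (s ^ (m - 1) * (List.map v L).prod * star s)
            = (v p * s ^ (m - 1)) * ((List.map v L).prod * star s) by
              simp [mul_assoc],
          hc, harith, pow_add]
        simp [mul_assoc]
  intro a ha
  rw [hV a]
  have := key a.primeFactorsList (fun p hp => Nat.prime_of_mem_primeFactorsList hp)
  rwa [Nat.prod_primeFactorsList ha.ne'] at this
end

section
/- Let s, t be isometries with t² = s³, st = ts, and v an isometry with v s = s^a v, v t = t^a v for a positive integer a. Then the map X : P ⋊ ℕ× → B(H) given on (m, a) with m = 2x + 3y (x, y ∈ ℕ) by X_{(m,a)} = s^x t^y v_a is a well-defined isometric monoid homomorphism: X_{(m,a)} is an isometry, X_{(0,1)} = 1, and X_{(m,a)(n,b)} = X_{(m,a)} X_{(n,b)}. -/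
/-- The formula X_{(m,a)} = s^x t^y v_a (m = 2x + 3y) gives a well-defined
isometric monoid homomorphism of P ⋊ ℕ×: the value does not depend on the
decomposition m = 2x + 3y, each X_{(m,a)} is an isometry, X_{(0,1)} = 1, and
X_{(m,a)(n,b)} = X_{(m,a)} X_{(n,b)}. -/
theorem stmt16 {A : Type*} [Ring A] [StarRing A] (s t : A) (v : ℕ → A)
    (hs : star s * s = 1) (ht : star t * t = 1)
    (hv : ∀ a : ℕ, 0 < a → star (v a) * v a = 1)
    (hR1 : t ^ 2 = s ^ 3) (hR2 : s * t = t * s)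
    (hvmul : ∀ a b : ℕ, 0 < a → 0 < b → v a * v b = v (a * b))
    (hv1 : v 1 = 1)
    (hvs : ∀ a : ℕ, 0 < a → v a * s = s ^ a * v a)
    (hvt : ∀ a : ℕ, 0 < a → v a * t = t ^ a * v a) :
    (∀ x y x' y' : ℕ, 2 * x + 3 * y = 2 * x' + 3 * y' →
      s ^ x * t ^ y = s ^ x' * t ^ y') ∧
    (∀ (x y a : ℕ), 0 < a →
      star (s ^ x * t ^ y * v a) * (s ^ x * t ^ y * v a) = 1) ∧
    (s ^ 0 * t ^ 0 * v 1 = 1) ∧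
    (∀ (x y x' y' a b : ℕ), 0 < a → 0 < b →
      s ^ (x + a * x') * t ^ (y + a * y') * v (a * b)
        = (s ^ x * t ^ y * v a) * (s ^ x' * t ^ y' * v b)) := by
  have hc : Commute s t := hR2
  -- powers of s and t commute
  have hst : ∀ m n : ℕ, ∀ w : A, t ^ n * (s ^ m * w) = s ^ m * (t ^ n * w) := by
    intro m n w
    rw [← mul_assoc, ← (hc.pow_pow m n).eq, mul_assoc]
  -- key equality coming from t² = s³
  have key : ∀ x y k : ℕ, s ^ (x + 3 * k) * t ^ y = s ^ x * t ^ (y + 2 * k) := by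
    intro x y k
    have h3 : s ^ (3 * k) = t ^ (2 * k) := by
      rw [pow_mul, pow_mul, hR1]
    calc s ^ (x + 3 * k) * t ^ y = s ^ x * (s ^ (3 * k) * t ^ y) := by
          rw [pow_add, mul_assoc]
      _ = s ^ x * (t ^ (2 * k) * t ^ y) := by rw [h3]
      _ = s ^ x * t ^ (y + 2 * k) := by rw [← pow_add, Nat.add_comm]
  -- isometry of powers
  have hpow : ∀ w : A, star w * w = 1 → ∀ n : ℕ, star (w ^ n) * w ^ n = 1 := by
    intro w hw n
    induction n with
    | zero => simp
    | succ n ih =>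
        rw [pow_succ, star_mul, mul_assoc, ← mul_assoc (star (w ^ n)), ih,
          one_mul, hw]
  refine ⟨?_, ?_, ?_, ?_⟩
  · -- well-definedness
    intro x y x' y' h
    rcases le_total y y' with hle | hle
    · obtain ⟨k, hk1, hk2⟩ : ∃ k, y' = y + 2 * k ∧ x = x' + 3 * k :=
        ⟨(y' - y) / 2, by omega, by omega⟩
      rw [hk2, hk1, key]
    · obtain ⟨k, hk1, hk2⟩ : ∃ k, y = y' + 2 * k ∧ x' = x + 3 * k :=
        ⟨(y - y') / 2, by omega, by omega⟩
      rw [hk2, hk1, key]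
  · -- isometry
    intro x y a ha
    rw [star_mul, star_mul]
    simp only [mul_assoc]
    rw [← mul_assoc (star (s ^ x)) (s ^ x), hpow s hs x, one_mul,
      ← mul_assoc (star (t ^ y)) (t ^ y), hpow t ht y, one_mul, hv a ha]
  · simp [hv1]
  · -- multiplicativity
    intro x y x' y' a b ha hb
    have ca : ∀ n : ℕ, v a * s ^ n = s ^ (a * n) * v a := by
      intro n
      induction n with
      | zero => simp
      | succ n ih =>
          rw [pow_succ, ← mul_assoc, ih, mul_assoc, hvs a ha, ← mul_assoc,
            ← pow_add, Nat.mul_succ]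
    have cb : ∀ n : ℕ, v a * t ^ n = t ^ (a * n) * v a := by
      intro n
      induction n with
      | zero => simp
      | succ n ih =>
          rw [pow_succ, ← mul_assoc, ih, mul_assoc, hvt a ha, ← mul_assoc,
            ← pow_add, Nat.mul_succ]
    have ca' : ∀ (n : ℕ) (w : A), v a * (s ^ n * w) = s ^ (a * n) * (v a * w) := by
      intro n w; rw [← mul_assoc, ca n, mul_assoc]
    have cb' : ∀ (n : ℕ) (w : A), v a * (t ^ n * w) = t ^ (a * n) * (v a * w) := by
      intro n w; rw [← mul_assoc, cb n, mul_assoc]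
    symm
    simp only [mul_assoc]
    rw [ca', hst (a * x') y, cb', hvmul a b ha hb, pow_add, pow_add]
    simp only [mul_assoc]
end
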